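/- Let L be a free ℤ-module of finite rank k with a negative definite symmetric bilinear form B : L × L → ℤ. Suppose α₁, …, α_k ∈ L satisfy B(α_i, α_i) = −1 for all i, and for all i ≠ j one has α_i ≠ α_j and α_i ≠ −α_j. Then there is a ℤ-linear isomorphism f : L ≃ ℤ^k such that B(x, y) = −∑_{i=1}^{k} f(x)_i · f(y)_i for all x, y ∈ L, i.e. (L, B) is isometric to the standard negative definite diagonal lattice ⟨−1⟩ ⊕ ⋯ ⊕ ⟨−1⟩ (k copies). -/

import Mathlib

/-- If `L` is a free `ℤ`-module of finite rank `k` with a negative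
definite symmetric bilinear form `B` and `α₁, …, α_k` have square `−1`
with `αᵢ ≠ ±αⱼ` for `i ≠ j`, then `(L, B)` is isometric to the standard
negative definite diagonal lattice `⟨−1⟩ ⊕ ⋯ ⊕ ⟨−1⟩` (`k` copies). -/
theorem neg_def_isometric_to_standard_diagonal
    (L : Type*) [AddCommGroup L] [Module ℤ L]
    [Module.Free ℤ L] [Module.Finite ℤ L]
    (B : L →ₗ[ℤ] L →ₗ[ℤ] ℤ)
    (hsymm : ∀ u v : L, B u v = B v u)
    (hneg : ∀ v : L, v ≠ 0 → B v v < 0)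
    (k : ℕ) (hrank : Module.finrank ℤ L = k)
    (α : Fin k → L)
    (hdiag : ∀ i, B (α i) (α i) = -1)
    (hne : ∀ i j, i ≠ j → α i ≠ α j ∧ α i ≠ -α j) :
    ∃ f : L ≃ₗ[ℤ] (Fin k → ℤ),
      ∀ x y : L, B x y = -∑ i : Fin k, f x i * f y i := by
  classical
  have horth : ∀ i j, i ≠ j → B (α i) (α j) = 0 := by
    intro i j hij
    obtain ⟨h1, h2⟩ := hne i j hij
    have hsub : B (α i - α j) (α i - α j) < 0 := hneg _ (sub_ne_zero.mpr h1)
    have hadd : B (α i + α j) (α i + α j) < 0 := by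
      apply hneg
      intro h
      exact h2 (eq_neg_of_add_eq_zero_left h)
    have e1 : B (α i - α j) (α i - α j) = -2 - 2 * B (α i) (α j) := by
      simp only [map_sub, LinearMap.sub_apply, hdiag, hsymm (α j) (α i)]
      ring
    have e2 : B (α i + α j) (α i + α j) = -2 + 2 * B (α i) (α j) := by
      simp only [map_add, LinearMap.add_apply, hdiag, hsymm (α j) (α i)]
      ring
    rw [e1] at hsub; rw [e2] at hadd; omega
  set g : L →ₗ[ℤ] (Fin k → ℤ) := LinearMap.pi (fun i => -(B.flip (α i))) with hg
  have hgdef : ∀ (x : L) (i : Fin k), g x i = -(B x (α i)) := fun x i => rfl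
  have hsumB : ∀ (c : Fin k → ℤ) (j : Fin k),
      B (∑ i, c i • α i) (α j) = -(c j) := by
    intro c j
    rw [map_sum, LinearMap.sum_apply]
    rw [Finset.sum_eq_single j]
    · simp [hdiag]
    · intro i _ hij
      simp [horth i j hij]
    · simp
  have hrep : ∀ x : L, x = ∑ i, g x i • α i := by
    intro x
    set y : L := x - ∑ i, g x i • α i with hy
    have hBy : ∀ j, B y (α j) = 0 := by
      intro j
      rw [hy, map_sub, LinearMap.sub_apply, hsumB]
      simp [hgdef]
    by_contra hne0
    have hyne : y ≠ 0 := fun h => hne0 (sub_eq_zero.mp h)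
    have hli : LinearIndependent ℤ (Fin.cons y α : Fin (k + 1) → L) := by
      rw [Fintype.linearIndependent_iff]
      intro c hc
      rw [Fin.sum_univ_succ] at hc
      simp only [Fin.cons_zero, Fin.cons_succ] at hc
      have hz : ∀ j : Fin k, c j.succ = 0 := by
        intro j
        have h0 := congrArg (fun z => B z (α j)) hc
        simp only [map_add, LinearMap.add_apply, map_sum, LinearMap.sum_apply,
          map_zero, LinearMap.zero_apply] at h0
        simp [hBy] at h0
        rw [Finset.sum_eq_single j] at h0
        · rw [hdiag] at h0
          omega
        · intro i _ hij
          simp [horth i j hij]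
        · simp
      have hc00 : c 0 = 0 := by
        have h1 := congrArg (fun z => B z y) hc
        simp [hz] at h1
        rcases h1 with h | h
        · exact h
        · exact absurd h (ne_of_lt (hneg y hyne))
      intro i
      refine Fin.cases hc00 hz i
    have hcard := hli.fintype_card_le_finrank
    rw [hrank] at hcard
    simp at hcard
  have hinj : Function.Injective g := by
    intro a b hab
    rw [hrep a, hrep b, hab]
  have hsurj : Function.Surjective g := by
    intro w
    refine ⟨∑ i, w i • α i, ?_⟩
    funext j
    rw [hgdef, hsumB, neg_neg]
  refine ⟨LinearEquiv.ofBijective g ⟨hinj, hsurj⟩, fun x y => ?_⟩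
  have key : ∀ i, g x i * B (α i) y = -(g x i * g y i) := by
    intro i
    rw [hgdef, hgdef, hsymm (α i) y]
    ring
  have expand : B x y = ∑ i, g x i * B (α i) y := by
    conv_lhs => rw [hrep x]
    simp
  rw [expand, Finset.sum_congr rfl fun i _ => key i]
  exact Finset.sum_neg_distrib (f := fun i => g x i * g y i)
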